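/- Let C be an abelian category with a central charge Z, and let f : V₁ → V₂ be a morphism between Z-semistable objects of the same slope, i.e. Im(conj(Z(V₁))·Z(V₂)) = 0. Then the kernel of f, the image of f, and the cokernel of f are each either zero or Z-semistable of the same slope as V₁. -/

import Mathlib

open CategoryTheory CategoryTheory.Limits

/-- `arg z ≤ arg w` for arguments taken in `(0, π]`. -/
def argLE (z w : ℂ) : Prop := 0 ≤ ((starRingEnd ℂ) z * w).im

/-- `z` and `w` have the same argument (slope). -/
def sameSlope (z w : ℂ) : Prop := ((starRingEnd ℂ) z * w).im = 0

/-- membership in `H₊ = {z : Im z > 0, or Im z = 0 and Re z < 0}`. -/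
def memHPlus (z : ℂ) : Prop := 0 < z.im ∨ (z.im = 0 ∧ z.re < 0)

/-- A central charge on an abelian category: additive on short exact sequences and
taking values in `H₊` on nonzero objects. -/
def IsCentralCharge {C : Type*} [Category C] [Abelian C] (Z : C → ℂ) : Prop :=
  (∀ S : ShortComplex C, S.ShortExact → Z S.X₂ = Z S.X₁ + Z S.X₃) ∧
  (∀ E : C, ¬ IsZero E → memHPlus (Z E))

/-- A nonzero object `E` is `Z`-semistable if `arg Z(E') ≤ arg Z(E)` for every nonzero
subobject `E'` of `E`. -/
def IsSemistable {C : Type*} [Category C] [Abelian C] (Z : C → ℂ) (E : C) : Prop :=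
  ¬ IsZero E ∧ ∀ E' : Subobject E, ¬ IsZero (E' : C) → argLE (Z (E' : C)) (Z E)

/-! ### Arithmetic lemmas about `H₊`, `argLE` and `sameSlope` -/

lemma imB (z w : ℂ) : ((starRingEnd ℂ) z * w).im = z.re * w.im - z.im * w.re := by
  simp [Complex.mul_im]; ring

lemma exists_pos_mul {z w : ℂ} (hz : memHPlus z) (hw : memHPlus w)
    (h : sameSlope z w) : ∃ c : ℝ, 0 < c ∧ w = (c : ℂ) * z := by
  rw [sameSlope, imB] at h
  rcases hz with hz | ⟨hz0, hzre⟩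
  · have hd : 0 < w.im := by
      rcases hw with hw | ⟨hw0, hwre⟩
      · exact hw
      · exfalso
        have hw0' : w.re = 0 := by
          rw [hw0] at h
          have : z.im * w.re = 0 := by linarith
          exact ((mul_eq_zero.mp this).resolve_left (ne_of_gt hz)).symm ▸ rfl
        linarith
    refine ⟨w.im / z.im, by positivity, ?_⟩
    apply Complex.ext
    · simp only [Complex.mul_re, Complex.ofReal_re, Complex.ofReal_im, zero_mul, sub_zero]
      field_simp
      nlinarith
    · simp only [Complex.mul_im, Complex.ofReal_re, Complex.ofReal_im, zero_mul, add_zero]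
      field_simp
  · have hzre' : z.re ≠ 0 := ne_of_lt hzre
    have hw0 : w.im = 0 := by
      rw [hz0] at h
      have : z.re * w.im = 0 := by linarith
      exact (mul_eq_zero.mp this).resolve_left hzre'
    rcases hw with hw | ⟨_, hwre⟩
    · rw [hw0] at hw; exact absurd hw (lt_irrefl 0)
    refine ⟨w.re / z.re, div_pos_of_neg_of_neg hwre hzre, ?_⟩
    apply Complex.ext
    · simp only [Complex.mul_re, Complex.ofReal_re, Complex.ofReal_im, hz0, zero_mul,
        mul_zero, sub_zero]
      field_simp
    · simp only [Complex.mul_im, Complex.ofReal_re, Complex.ofReal_im, hz0, hw0, zero_mul,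
        mul_zero, add_zero]

lemma sameSlope_symm {z w : ℂ} (h : sameSlope z w) : sameSlope w z := by
  rw [sameSlope, imB] at h ⊢; linarith

lemma argLE_of_sameSlope {x y e : ℂ} (hx : memHPlus x) (hy : memHPlus y)
    (hxy : sameSlope x y) (he : argLE e x) : argLE e y := by
  obtain ⟨c, hc, rfl⟩ := exists_pos_mul hx hy hxy
  rw [argLE, imB] at he ⊢
  simp only [Complex.mul_re, Complex.mul_im, Complex.ofReal_re, Complex.ofReal_im]
  nlinarith

lemma sameSlope_trans {x y z : ℂ} (hx : memHPlus x) (hy : memHPlus y)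
    (hxy : sameSlope x y) (hyz : sameSlope y z) : sameSlope x z := by
  obtain ⟨c, hc, rfl⟩ := exists_pos_mul hx hy hxy
  rw [sameSlope, imB] at hyz ⊢
  simp only [Complex.mul_re, Complex.mul_im, Complex.ofReal_re, Complex.ofReal_im] at hyz
  nlinarith

lemma slope_facts {k i q v₁ v₂ : ℂ}
    (hv₁ : memHPlus v₁) (hv₂ : memHPlus v₂) (hs : sameSlope v₁ v₂)
    (h1 : v₁ = k + i) (h2 : v₂ = i + q)
    (hk : k = 0 ∨ argLE k v₁) (hi : i = 0 ∨ argLE i v₂) :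
    sameSlope k v₁ ∧ sameSlope i v₁ ∧ sameSlope q v₁ := by
  obtain ⟨c, hc, hcv⟩ := exists_pos_mul hv₁ hv₂ hs
  have hi' : i = v₁ - k := by rw [h1]; ring
  have hq' : q = v₂ - i := by rw [h2]; ring
  subst hi'
  simp only [sameSlope, argLE, imB] at hk hi ⊢
  simp only [hq', hcv, Complex.sub_re, Complex.sub_im, Complex.mul_re, Complex.mul_im,
    Complex.ofReal_re, Complex.ofReal_im, zero_mul, add_zero, sub_zero, mul_zero] at hk hi ⊢
  have hkv : k.re * v₁.im - k.im * v₁.re = 0 := by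
    rcases hk with hk | hk
    · rw [hk]; simp
    · rcases hi with hi | hi
      · have e1 : v₁.re - k.re = 0 := congrArg Complex.re hi
        have e2 : v₁.im - k.im = 0 := congrArg Complex.im hi
        linear_combination k.re * e2 - k.im * e1
      · nlinarith
  refine ⟨hkv, by nlinarith, by nlinarith⟩

/-! ### Category-theoretic lemmas -/

open ZeroObject

section CategoryLemmas

variable {C : Type*} [Category C] [Abelian C] (Z : C → ℂ)

lemma epi_to_zero {X Y : C} (hY : IsZero Y) (e : X ⟶ Y) : Epi e :=
  ⟨fun u v _ => hY.eq_of_src u v⟩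

lemma isZero_of_epi {X Y : C} (e : X ⟶ Y) [Epi e] (hX : IsZero X) : IsZero Y := by
  have he : e = 0 := hX.eq_of_src e 0
  haveI : Epi (0 : X ⟶ Y) := by rw [← he]; infer_instance
  exact IsZero.of_epi_zero X Y

lemma Z_zero (hZ : IsCentralCharge Z) : Z (0 : C) = 0 := by
  have h := hZ.1 (ShortComplex.mk (0 : (0:C) ⟶ (0:C)) (0 : (0:C) ⟶ (0:C)) (by simp)) ?_
  · dsimp at h; linear_combination -h
  · exact ShortComplex.ShortExact.mk' (ShortComplex.exact_of_isZero_X₂ _ (isZero_zero C))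
      ⟨fun u v _ => (isZero_zero C).eq_of_tgt u v⟩ (epi_to_zero (isZero_zero C) _)

lemma Z_iso (hZ : IsCentralCharge Z) {X Y : C} (e : X ≅ Y) : Z X = Z Y := by
  have h := hZ.1 (ShortComplex.mk e.hom (0 : Y ⟶ (0:C)) comp_zero) ?_
  · dsimp at h; rw [Z_zero Z hZ] at h; linear_combination -h
  · exact ShortComplex.ShortExact.mk' ((ShortComplex.exact_iff_epi _ rfl).2 inferInstance)
      inferInstance (epi_to_zero (isZero_zero C) _)

lemma Z_isZero (hZ : IsCentralCharge Z) {X : C} (hX : IsZero X) : Z X = 0 := by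
  rw [Z_iso Z hZ hX.isoZero, Z_zero Z hZ]

lemma argLE_of_mono (hZ : IsCentralCharge Z) {A E : C} (hE : IsSemistable Z E)
    (i : A ⟶ E) [Mono i] (hA : ¬ IsZero A) : argLE (Z A) (Z E) := by
  have e := Subobject.underlyingIso i
  have h := hE.2 (Subobject.mk i) (fun h => hA (h.of_iso e.symm))
  rwa [Z_iso Z hZ e] at h

lemma ses1 {V₁ V₂ : C} (f : V₁ ⟶ V₂) :
    (ShortComplex.mk (kernel.ι f) (Abelian.factorThruImage f)
      (by rw [← cancel_mono (Abelian.image.ι f)]; simp)).ShortExact := by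
  refine ShortComplex.ShortExact.mk' ?_ inferInstance inferInstance
  let φ : ShortComplex.mk (kernel.ι f) (Abelian.factorThruImage f)
      (by rw [← cancel_mono (Abelian.image.ι f)]; simp) ⟶
      ShortComplex.mk (kernel.ι f) f (by simp) :=
    { τ₁ := 𝟙 _, τ₂ := 𝟙 _, τ₃ := Abelian.image.ι f }
  haveI : Epi φ.τ₁ := by dsimp [φ]; infer_instance
  haveI : IsIso φ.τ₂ := by dsimp [φ]; infer_instance
  haveI : Mono φ.τ₃ := by dsimp [φ]; infer_instance
  rw [ShortComplex.exact_iff_of_epi_of_isIso_of_mono φ]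
  exact ShortComplex.exact_kernel f

lemma ses2 {V₁ V₂ : C} (f : V₁ ⟶ V₂) :
    (ShortComplex.mk (Abelian.image.ι f) (cokernel.π f)
      (kernel.condition _)).ShortExact :=
  ShortComplex.ShortExact.mk' (ShortComplex.exact_kernel (cokernel.π f))
    inferInstance inferInstance

lemma ses3 {V₁ V₂ : C} (f : V₁ ⟶ V₂) (E' : Subobject (cokernel f)) :
    (ShortComplex.mk
      (pullback.lift (0 : Abelian.image f ⟶ (E' : C)) (Abelian.image.ι f)
        (by simp [kernel.condition]))
      (pullback.fst E'.arrow (cokernel.π f))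
      (pullback.lift_fst _ _ _)).ShortExact := by
  refine ShortComplex.ShortExact.mk' ?_ ?_ inferInstance
  · apply ShortComplex.exact_of_f_is_kernel
    refine KernelFork.IsLimit.ofι _ _
      (fun {W} g' hg' => kernel.lift (cokernel.π f) (g' ≫ pullback.snd _ _) ?_)
      (fun {W} g' hg' => ?_) (fun {W} g' hg' m hm => ?_)
    · rw [Category.assoc, ← pullback.condition, ← Category.assoc, hg', zero_comp]
    · apply pullback.hom_ext
      · dsimp only; rw [Category.assoc, pullback.lift_fst, comp_zero]; exact hg'.symm
      · dsimp only; rw [Category.assoc, pullback.lift_snd]; exact kernel.lift_ι _ _ _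
    · rw [← cancel_mono (Abelian.image.ι f)]
      dsimp
      rw [kernel.lift_ι, ← hm]
      simp [-equalizer_as_kernel]
      rw [pullback.lift_snd]
  · exact mono_of_mono_fac (pullback.lift_snd _ _ _)

end CategoryLemmas

/-- For a morphism `f : V₁ ⟶ V₂` of `Z`-semistable objects of the same slope, the
kernel, image and cokernel of `f` are each zero or `Z`-semistable of the same slope
as `V₁`. -/
theorem kernel_image_cokernel_semistable {C : Type*} [Category C] [Abelian C]
    (Z : C → ℂ) (hZ : IsCentralCharge Z) (V₁ V₂ : C)
    (h₁ : IsSemistable Z V₁) (h₂ : IsSemistable Z V₂)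
    (hslope : sameSlope (Z V₁) (Z V₂)) (f : V₁ ⟶ V₂) :
    (IsZero (kernel f) ∨
      (IsSemistable Z (kernel f) ∧ sameSlope (Z (kernel f)) (Z V₁))) ∧
    (IsZero (image f) ∨
      (IsSemistable Z (image f) ∧ sameSlope (Z (image f)) (Z V₁))) ∧
    (IsZero (cokernel f) ∨
      (IsSemistable Z (cokernel f) ∧ sameSlope (Z (cokernel f)) (Z V₁))) := by
  have hadd := hZ.1
  have hH := hZ.2
  have hv₁ : memHPlus (Z V₁) := hH V₁ h₁.1
  have hv₂ : memHPlus (Z V₂) := hH V₂ h₂.1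
  have hImg : Z (Abelian.image f) = Z (image f) := Z_iso Z hZ (Abelian.imageIsoImage f)
  have hS1 : Z V₁ = Z (kernel f) + Z (image f) := by
    have h := hadd _ (ses1 f); dsimp at h; rw [hImg] at h; exact h
  have hS2 : Z V₂ = Z (image f) + Z (cokernel f) := by
    have h := hadd _ (ses2 f); dsimp at h; rw [hImg] at h; exact h
  have hk : Z (kernel f) = 0 ∨ argLE (Z (kernel f)) (Z V₁) := by
    by_cases h : IsZero (kernel f)
    · exact Or.inl (Z_isZero Z hZ h)
    · exact Or.inr (argLE_of_mono Z hZ h₁ (kernel.ι f) h)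
  have hi : Z (image f) = 0 ∨ argLE (Z (image f)) (Z V₂) := by
    by_cases h : IsZero (image f)
    · exact Or.inl (Z_isZero Z hZ h)
    · exact Or.inr (argLE_of_mono Z hZ h₂ (image.ι f) h)
  obtain ⟨sk, si, sq⟩ := slope_facts hv₁ hv₂ hslope hS1 hS2 hk hi
  have hiv₂ : sameSlope (Z (image f)) (Z V₂) := by
    by_cases h : IsZero (image f)
    · rw [sameSlope, Z_isZero Z hZ h]; simp
    · exact sameSlope_trans (hH _ h) hv₁ si hslope
  refine ⟨?_, ?_, ?_⟩
  · -- kernel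
    by_cases hK : IsZero (kernel f)
    · exact Or.inl hK
    · have hKH : memHPlus (Z (kernel f)) := hH _ hK
      refine Or.inr ⟨⟨hK, fun E'' hE'' => ?_⟩, sk⟩
      have h := argLE_of_mono Z hZ h₁ (E''.arrow ≫ kernel.ι f) hE''
      exact argLE_of_sameSlope hv₁ hKH (sameSlope_symm sk) h
  · -- image
    by_cases hI : IsZero (image f)
    · exact Or.inl hI
    · have hIH : memHPlus (Z (image f)) := hH _ hI
      refine Or.inr ⟨⟨hI, fun E'' hE'' => ?_⟩, si⟩
      have h := argLE_of_mono Z hZ h₂ (E''.arrow ≫ image.ι f) hE''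
      exact argLE_of_sameSlope hv₂ hIH (sameSlope_symm hiv₂) h
  · -- cokernel
    by_cases hQ : IsZero (cokernel f)
    · exact Or.inl hQ
    · have hQH : memHPlus (Z (cokernel f)) := hH _ hQ
      refine Or.inr ⟨⟨hQ, fun E' hE' => ?_⟩, sq⟩
      have hS3 := hadd _ (ses3 f E')
      dsimp at hS3
      have hPne : ¬ IsZero (pullback E'.arrow (cokernel.π f)) := fun h =>
        hE' (isZero_of_epi (pullback.fst E'.arrow (cokernel.π f)) h)
      have hP := argLE_of_mono Z hZ h₂ (pullback.snd E'.arrow (cokernel.π f)) hPne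
      rw [hS3, hImg] at hP
      have he : argLE (Z (E' : C)) (Z V₂) := by
        rw [argLE] at hP ⊢
        rw [sameSlope] at hiv₂
        rw [map_add, add_mul, Complex.add_im, hiv₂, zero_add] at hP
        exact hP
      have hqv₂ : sameSlope (Z (cokernel f)) (Z V₂) := sameSlope_trans hQH hv₁ sq hslope
      exact argLE_of_sameSlope hv₂ hQH (sameSlope_symm hqv₂) he
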